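/- Let v₁ = ((m_1,r_1),…,(m_{n₁},r_{n₁})) and v₂ = ((m_1',r_1'),…,(m_{n₂}',r_{n₂}')) be lists of disk data with all radii > 0, such that both sums H_{v₁}, H_{v₂} : S¹ → ℕ are properly upper semicontinuous, every boundary trace of a signal in v₁ or v₂ has exactly 0 or exactly 2 elements, and the set {x ∈ S¹ : H_{v₁}(x) ≠ H_{v₂}(x)} is finite. Then for every integer N with N ≥ n₁ and N ≥ n₂, DoF_N(v₁) = DoF_N(v₂). -/

import Mathlib

noncomputable section

open scoped BigOperators
open Classical

/-- The unit circle `S¹` in the plane (modeled as `ℂ ≅ ℝ²` with the Euclidean norm). -/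
def S1 : Set ℂ := {x : ℂ | ‖x‖ = 1}

/-- The signal function `h_{(m,r)}`: indicator of the closed disk of center `m`, radius `r`. -/
def signal (m : ℂ) (r : ℝ) (x : ℂ) : ℕ := if ‖x - m‖ ≤ r then 1 else 0

/-- The boundary trace `∂h_{(m,r)} = {x ∈ S¹ : ‖x − m‖ = r}`. -/
def bTrace (m : ℂ) (r : ℝ) : Set ℂ := {x : ℂ | ‖x‖ = 1 ∧ ‖x - m‖ = r}

/-- The sum `H_v` of the signal functions of the disk data `v = ((m_i, r_i))_{i<n}`. -/
def Hsum {n : ℕ} (v : Fin n → ℂ × ℝ) (x : ℂ) : ℕ := ∑ i, signal (v i).1 (v i).2 x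

/-- Rotation of the plane by angle `t` about the origin. -/
def rot (t : ℝ) (x : ℂ) : ℂ := Complex.exp (t * Complex.I) * x

/-- `H(x⁺) = a`: `H` equals `a` just after `x` (counterclockwise). -/
def rightVal (H : ℂ → ℕ) (x : ℂ) (a : ℕ) : Prop :=
  ∃ δ > (0 : ℝ), ∀ t : ℝ, 0 < t → t < δ → H (rot t x) = a

/-- `H(x⁻) = b`: `H` equals `b` just before `x`. -/
def leftVal (H : ℂ → ℕ) (x : ℂ) (b : ℕ) : Prop :=
  ∃ δ > (0 : ℝ), ∀ t : ℝ, -δ < t → t < 0 → H (rot t x) = b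

/-- `H` is properly upper semicontinuous on `S¹`: at each point both one-sided limits
exist and the value equals their maximum. -/
def ProperlyUSC (H : ℂ → ℕ) : Prop :=
  ∀ x ∈ S1, ∃ a b : ℕ, rightVal H x a ∧ leftVal H x b ∧ H x = max a b

/-- `H* = max_{S¹} H`. -/
def maxOnCircle (H : ℂ → ℕ) : ℕ := sSup (H '' S1)

/-- `H_* = min_{S¹} H`. -/
def minOnCircle (H : ℂ → ℕ) : ℕ := sInf (H '' S1)

/-- The superlevel set `{x ∈ S¹ : H(x) ≥ k}`. -/
def superlevel (H : ℂ → ℕ) (k : ℕ) : Set ℂ := {x ∈ S1 | k ≤ H x}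

/-- Number of connected components of a subset of the plane. -/
def numCC (A : Set ℂ) : ℕ := Nat.card (ConnectedComponents ↥A)

/-- `τ(H) = Σ_{k=H_*+1}^{H*} (c_k(H) − 1)`. -/
def tau (H : ℂ → ℕ) : ℕ :=
  ∑ k ∈ Finset.Icc (minOnCircle H + 1) (maxOnCircle H), (numCC (superlevel H k) - 1)

/-- `ρ` for the degrees-of-freedom count. -/
def rho (m : ℂ) (r : ℝ) : ℕ :=
  if bTrace m r = ∅ then 3
  else if (bTrace m r).ncard = 1 ∨ (bTrace m r).ncard = 2 then 1
  else 0

/-- `N`-degrees of freedom of a decomposition with `n ≤ N` signals. -/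
def DoF (N : ℕ) {n : ℕ} (v : Fin n → ℂ × ℝ) : ℕ :=
  3 * (N - n) + ∑ i, rho (v i).1 (v i).2


lemma norm_rot (t : ℝ) (x : ℂ) : ‖rot t x‖ = ‖x‖ := by
  rw [rot, norm_mul, Complex.norm_exp_ofReal_mul_I, one_mul]

lemma rot_zero (x : ℂ) : rot 0 x = x := by simp [rot]

lemma one_sub_cos_le (t : ℝ) : 1 - Real.cos t ≤ t^2/2 := by
  have h1 : |Real.sin (t/2)| ≤ |t/2| := Real.abs_sin_le_abs
  have h2 : Real.sin (t/2)^2 ≤ (t/2)^2 := by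
    rw [← sq_abs, ← sq_abs (t/2)]
    exact pow_le_pow_left₀ (abs_nonneg _) h1 2
  have h3 : Real.cos (t/2)^2 = 1/2 + Real.cos t / 2 := by
    have := Real.cos_sq (t/2)
    rw [show 2*(t/2) = t by ring] at this
    linarith
  have h4 : Real.sin (t/2)^2 + Real.cos (t/2)^2 = 1 := Real.sin_sq_add_cos_sq _
  nlinarith

lemma sin_lower {t : ℝ} (h0 : 0 < t) (h1 : t ≤ 1) : 3/4 * t < Real.sin t := by
  have h := Real.sin_gt_sub_cube h0
  have ht2 : t^2 ≤ 1 := by nlinarith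
  have h3 : t^3 ≤ t := by nlinarith [mul_le_mul_of_nonneg_left ht2 h0.le]
  linarith

lemma normSq_rot_sub (m x : ℂ) (hx : ‖x‖ = 1) (t : ℝ) :
    ‖rot t x - m‖^2 = 1 + ‖m‖^2 -
      2*(Real.cos t * (x * (starRingEnd ℂ) m).re - Real.sin t * (x * (starRingEnd ℂ) m).im) := by
  have h1 : ‖rot t x - m‖^2 = Complex.normSq (rot t x - m) := by
    rw [← Complex.sq_norm]
  rw [h1, Complex.normSq_sub]
  have h2 : Complex.normSq (rot t x) = 1 := by
    have hn : ‖rot t x‖ = 1 := by rw [norm_rot, hx]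
    rw [← Complex.sq_norm, hn]; norm_num
  have h3 : Complex.normSq m = ‖m‖^2 := by rw [← Complex.sq_norm]
  have h4 : rot t x * (starRingEnd ℂ) m = Complex.exp (t * Complex.I) * (x * (starRingEnd ℂ) m) := by
    rw [rot]; ring
  rw [h2, h3, h4, Complex.mul_re, Complex.exp_ofReal_mul_I_re, Complex.exp_ofReal_mul_I_im]

-- locally constant off the boundary
lemma signal_locally_const (m x : ℂ) (r : ℝ) (hx : ‖x‖ = 1) (hne : ‖x - m‖ ≠ r) :
    ∃ δ > (0:ℝ), ∀ t : ℝ, |t| < δ → signal m r (rot t x) = signal m r x := by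
  have hcont : Continuous (fun t : ℝ => ‖rot t x - m‖) := by
    apply Continuous.norm
    apply Continuous.sub ?_ continuous_const
    apply Continuous.mul ?_ continuous_const
    exact Complex.continuous_exp.comp (by continuity)
  set ε := |‖x - m‖ - r| with hε
  have hε0 : 0 < ε := abs_pos.mpr (sub_ne_zero.mpr hne)
  have := Metric.continuousAt_iff.mp (hcont.continuousAt (x := (0:ℝ))) ε hε0
  obtain ⟨δ, hδ0, hδ⟩ := this
  refine ⟨δ, hδ0, fun t ht => ?_⟩
  have h0 : dist t 0 < δ := by simpa [Real.dist_eq] using ht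
  have h2 := hδ h0
  rw [Real.dist_eq, rot_zero] at h2
  rcases lt_or_gt_of_ne hne with h | h
  · have hε' : ε = r - ‖x - m‖ := by rw [hε, abs_of_neg (by linarith)]; ring
    have : ‖rot t x - m‖ < r := by
      have := abs_lt.mp h2; rw [hε'] at this; linarith [this.2]
    rw [signal, signal, if_pos this.le, if_pos h.le]
  · have hε' : ε = ‖x - m‖ - r := by rw [hε, abs_of_pos (by linarith)]
    have : r < ‖rot t x - m‖ := by
      have := abs_lt.mp h2; rw [hε'] at this; linarith [this.1]
    rw [signal, signal, if_neg (not_le.mpr this), if_neg (not_le.mpr h)]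

lemma sign_dominates {a b : ℝ} (h : |a| < |b|) : ((0 < a + b ↔ 0 < b) ∧ (a + b < 0 ↔ b < 0)) := by
  constructor
  · constructor
    · intro hh; by_contra hb; push_neg at hb
      have h1 : |b| = -b := abs_of_nonpos hb
      have h2 := le_abs_self a
      linarith
    · intro hh
      have h1 : |b| = b := abs_of_pos hh
      have h2 := neg_abs_le a
      linarith
  · constructor
    · intro hh; by_contra hb; push_neg at hb
      have h1 : |b| = b := abs_of_nonneg hb
      have h2 := neg_abs_le a
      linarith
    · intro hh
      have h1 : |b| = -b := abs_of_neg hh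
      have h2 := le_abs_self a
      linarith

-- sign change at a boundary point with transversal crossing
set_option maxHeartbeats 1000000 in
lemma signal_cross (m x : ℂ) (r : ℝ) (hr : 0 < r) (hx : ‖x‖ = 1) (hb : ‖x - m‖ = r)
    (him : (x * (starRingEnd ℂ) m).im ≠ 0) :
    ∃ δ > (0:ℝ), ∀ t : ℝ, t ≠ 0 → |t| < δ →
      signal m r (rot t x) = if 0 < t * (x * (starRingEnd ℂ) m).im then 0 else 1 := by
  set A := (x * (starRingEnd ℂ) m).re with hA
  set B := (x * (starRingEnd ℂ) m).im with hB
  have hBpos : 0 < |B| := abs_pos.mpr him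
  refine ⟨min 1 (|B| / (2 * (|A| + 1))), lt_min one_pos (by positivity), fun t ht0 htδ => ?_⟩
  have ht1 : |t| < 1 := lt_of_lt_of_le htδ (min_le_left _ _)
  have ht2 : |t| < |B| / (2 * (|A| + 1)) := lt_of_lt_of_le htδ (min_le_right _ _)
  have htabs : 0 < |t| := abs_pos.mpr ht0
  -- g t := ‖rot t x - m‖² - r² = 2A(1-cos t) + 2B sin t
  have hg : ‖rot t x - m‖^2 - r^2 = 2*A*(1 - Real.cos t) + 2*B*Real.sin t := by
    have h1 := normSq_rot_sub m x hx t
    have h2 := normSq_rot_sub m x hx 0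
    rw [rot_zero, hb] at h2
    simp only [Real.cos_zero, Real.sin_zero] at h2
    rw [h1, h2]; ring
  -- dominant term
  have hcos1 : 0 ≤ 1 - Real.cos t := by linarith [Real.cos_le_one t]
  have hcos2 : 1 - Real.cos t ≤ t^2/2 := one_sub_cos_le t
  have hsin : 3/4 * |t| < |Real.sin t| ∧ ∀ s:ℝ, 0 < s * t → 0 < s * Real.sin t := by
    rcases lt_or_gt_of_ne ht0 with h | h
    · have h' : 0 < -t := by linarith
      have := sin_lower h' (by rw [abs_of_neg h] at ht1; linarith)
      rw [Real.sin_neg] at this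
      constructor
      · rw [abs_of_neg h, abs_of_neg (by linarith : Real.sin t < 0)]; linarith
      · intro s hs
        have hs' : s < 0 := by nlinarith
        nlinarith
    · have := sin_lower h (by rw [abs_of_pos h] at ht1; linarith)
      constructor
      · rw [abs_of_pos h, abs_of_pos (by linarith : 0 < Real.sin t)]; linarith
      · intro s hs
        have hs' : 0 < s := by nlinarith
        nlinarith
  have hdom : |2*A*(1 - Real.cos t)| < |2*B*Real.sin t| := by
    have e1 : |2*A*(1 - Real.cos t)| ≤ 2* |A| *(t^2/2) := by
      rw [abs_mul, abs_mul, abs_of_nonneg hcos1, abs_two]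
      have : |A| * (1 - Real.cos t) ≤ |A| * (t^2/2) :=
        mul_le_mul_of_nonneg_left hcos2 (abs_nonneg _)
      nlinarith [abs_nonneg A]
    have e2 : |t| * |t| = t^2 := by rw [abs_mul_abs_self]; ring
    have e3 : |A| * |t| ≤ (|A|+1) * (|B| / (2 * (|A| + 1))) := by
      apply mul_le_mul (by linarith) ht2.le (abs_nonneg _) (by positivity)
    have e4 : (|A|+1) * (|B| / (2 * (|A| + 1))) = |B|/2 := by
      field_simp
    have e5 : |2*B*Real.sin t| = 2 * |B| * |Real.sin t| := by
      rw [abs_mul, abs_mul, abs_two]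
    have e34 : |A| * |t| ≤ |B|/2 := e4 ▸ e3
    have q1 : 2 * |A| * (t^2/2) = (|A| * |t|) * |t| := by rw [← e2]; ring
    have q2 : (|A| * |t|) * |t| ≤ (|B|/2) * |t| :=
      mul_le_mul_of_nonneg_right e34 (abs_nonneg t)
    have c2 : 2 * |B| * (3/4 * |t|) < 2 * |B| * |Real.sin t| :=
      mul_lt_mul_of_pos_left hsin.1 (by positivity)
    have c3 : 0 < |B| * |t| := mul_pos hBpos htabs
    rw [e5]; nlinarith
  have hd := sign_dominates hdom
  have hts : 0 < t * Real.sin t := hsin.2 t (mul_self_pos.mpr ht0)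
  have htt : 0 < t * t := mul_self_pos.mpr ht0
  have hBt : t * B ≠ 0 := mul_ne_zero ht0 him
  rcases lt_or_gt_of_ne hBt with hneg | hpos
  · -- t*B < 0 : inside
    have h1 : 2*B*Real.sin t < 0 := by nlinarith
    have h3 : ‖rot t x - m‖^2 < r^2 := by
      have h5 := hd.2.mpr h1; linarith [hg, h5]
    have h4 : ‖rot t x - m‖ < r := lt_of_pow_lt_pow_left₀ 2 hr.le h3
    rw [signal, if_pos h4.le, if_neg (not_lt.mpr hneg.le)]
  · have h1 : 0 < 2*B*Real.sin t := by nlinarith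
    have h3 : r^2 < ‖rot t x - m‖^2 := by
      have h5 := hd.1.mpr h1; linarith [hg, h5]
    have h4 : r < ‖rot t x - m‖ := lt_of_pow_lt_pow_left₀ 2 (norm_nonneg _) h3
    rw [signal, if_neg (not_le.mpr h4), if_pos hpos]

lemma rot_injOn (x : ℂ) (hx : x ≠ 0) :
    Set.InjOn (fun t => rot t x) (Set.Ioo (-1) 1) := by
  intro s hs t ht h
  simp only [rot] at h
  have h2 : Complex.exp (s * Complex.I) = Complex.exp (t * Complex.I) :=
    mul_right_cancel₀ hx h
  obtain ⟨k, hk⟩ := Complex.exp_eq_exp_iff_exists_int.mp h2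
  have hkey : (s : ℂ) * Complex.I - t * Complex.I = k * (2 * Real.pi * Complex.I) := by
    rw [hk]; ring
  have him : s - t = k * (2 * Real.pi) := by
    have := congrArg Complex.im hkey
    simpa [Complex.mul_im, Complex.mul_re] using this
  have hk0 : k = 0 := by
    by_contra hne
    have h1 : (1:ℝ) ≤ |(k:ℝ)| := by exact_mod_cast Int.one_le_abs (by exact_mod_cast hne)
    have hlt : |s - t| < 2 * Real.pi := by
      have := hs.1; have := hs.2; have := ht.1; have := ht.2
      have hpi := Real.pi_gt_three
      rw [abs_sub_lt_iff]; constructor <;> nlinarith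
    rw [him, abs_mul] at hlt
    have : (1:ℝ) * (2*Real.pi) ≤ |(k:ℝ)| * |2*Real.pi| := by
      apply mul_le_mul h1 (le_abs_self _) (by positivity) (abs_nonneg _)
    nlinarith [Real.pi_pos, abs_of_pos (by positivity : (0:ℝ) < 2*Real.pi)]
  rw [hk0] at him; push_cast at him; linarith

lemma exists_rot_avoid {F : Set ℂ} (hF : F.Finite) (x : ℂ) (hx : x ≠ 0)
    (δ : ℝ) (hδ : 0 < δ) :
    ∃ t : ℝ, 0 < t ∧ t < δ ∧ rot t x ∉ F := by
  by_contra h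
  push_neg at h
  set ε := min δ 1 with hε
  have hε0 : 0 < ε := lt_min hδ one_pos
  have hsub : Set.Ioo (0:ℝ) ε ⊆ (fun t => rot t x) ⁻¹' F := fun t ht =>
    h t ht.1 (lt_of_lt_of_le ht.2 (min_le_left _ _))
  have hinj : Set.InjOn (fun t => rot t x) (Set.Ioo 0 ε) :=
    (rot_injOn x hx).mono (Set.Ioo_subset_Ioo (by linarith) (min_le_right _ _))
  have hfin : (Set.Ioo (0:ℝ) ε).Finite := by
    apply Set.Finite.of_finite_image (hF.subset ?_) hinj
    rintro y ⟨t, ht, rfl⟩; exact hsub ht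
  exact (Set.Ioo_infinite hε0) hfin

lemma exists_rot_avoid_neg {F : Set ℂ} (hF : F.Finite) (x : ℂ) (hx : x ≠ 0)
    (δ : ℝ) (hδ : 0 < δ) :
    ∃ t : ℝ, -δ < t ∧ t < 0 ∧ rot t x ∉ F := by
  by_contra h
  push_neg at h
  set ε := min δ 1 with hε
  have hε0 : 0 < ε := lt_min hδ one_pos
  have hsub : Set.Ioo (-ε) (0:ℝ) ⊆ (fun t => rot t x) ⁻¹' F := fun t ht =>
    h t (lt_of_le_of_lt (neg_le_neg (min_le_left _ _)) ht.1) ht.2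
  have hinj : Set.InjOn (fun t => rot t x) (Set.Ioo (-ε) 0) :=
    (rot_injOn x hx).mono (Set.Ioo_subset_Ioo (by
      have := min_le_right δ 1; linarith) (by linarith))
  have hfin : (Set.Ioo (-ε) (0:ℝ)).Finite := by
    apply Set.Finite.of_finite_image (hF.subset ?_) hinj
    rintro y ⟨t, ht, rfl⟩; exact hsub ht
  exact (Set.Ioo_infinite (by linarith)) hfin

lemma rightVal_unique {H : ℂ → ℕ} {x : ℂ} {a a' : ℕ}
    (h : rightVal H x a) (h' : rightVal H x a') : a = a' := by
  obtain ⟨δ, hδ, hH⟩ := h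
  obtain ⟨δ', hδ', hH'⟩ := h'
  have h1 : 0 < min δ δ' / 2 := by positivity
  have h2 : min δ δ' / 2 < δ := by have := min_le_left δ δ'; linarith
  have h3 : min δ δ' / 2 < δ' := by have := min_le_right δ δ'; linarith
  rw [← hH _ h1 h2, hH' _ h1 h3]

lemma leftVal_unique {H : ℂ → ℕ} {x : ℂ} {a a' : ℕ}
    (h : leftVal H x a) (h' : leftVal H x a') : a = a' := by
  obtain ⟨δ, hδ, hH⟩ := h
  obtain ⟨δ', hδ', hH'⟩ := h'
  have h0 : 0 < min δ δ' / 2 := by positivity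
  have h1 : -(min δ δ' / 2) < 0 := by linarith
  have h2 : -δ < -(min δ δ' / 2) := by have := min_le_left δ δ'; simp; linarith
  have h3 : -δ' < -(min δ δ' / 2) := by have := min_le_right δ δ'; simp; linarith
  rw [← hH _ h2 h1, hH' _ h3 h1]

lemma S1_infinite : S1.Infinite := by
  intro hfin
  have himg : (fun t : ℝ => rot t 1) '' (Set.Ioo 0 1) ⊆ S1 := by
    rintro y ⟨t, _, rfl⟩
    simpa [S1] using (norm_rot t 1).trans norm_one
  have := Set.Finite.of_finite_image (hfin.subset himg)
    ((rot_injOn 1 one_ne_zero).mono (Set.Ioo_subset_Ioo (by norm_num) le_rfl))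
  exact Set.Ioo_infinite one_pos this

lemma trace_im_ne {m : ℂ} {r : ℝ} {x : ℂ} (hc : (bTrace m r).ncard = 2)
    (hx : x ∈ bTrace m r) : (x * (starRingEnd ℂ) m).im ≠ 0 := by
  intro him
  have hm : m ≠ 0 := by
    rintro rfl
    by_cases hr1 : r = 1
    · have hS : bTrace 0 r = S1 := by
        ext y; simp [bTrace, S1, hr1]
      rw [hS, S1_infinite.ncard] at hc
      omega
    · have hE : bTrace 0 r = ∅ := by
        ext y
        simp only [bTrace, Set.mem_setOf_eq, Set.mem_empty_iff_false, iff_false, not_and]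
        intro h1
        rw [sub_zero, h1]
        exact fun h => hr1 h.symm
      rw [hE, Set.ncard_empty] at hc
      omega
  have hsub : bTrace m r ⊆ {x} := by
    rintro q ⟨hq1, hq2⟩
    obtain ⟨hx1, hx2⟩ := hx
    have e1 := normSq_rot_sub m x hx1 0
    have e2 := normSq_rot_sub m q hq1 0
    rw [rot_zero, hx2] at e1
    rw [rot_zero, hq2] at e2
    simp only [Real.cos_zero, Real.sin_zero, one_mul, zero_mul, sub_zero] at e1 e2
    have hre : (q * (starRingEnd ℂ) m).re = (x * (starRingEnd ℂ) m).re := by linarith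
    have hn1 : Complex.normSq x = 1 := by
      rw [← Complex.sq_norm, hx1]; norm_num
    have hn2 : Complex.normSq q = 1 := by
      rw [← Complex.sq_norm, hq1]; norm_num
    have hnx : Complex.normSq (x * (starRingEnd ℂ) m) = Complex.normSq m := by
      rw [Complex.normSq_mul, Complex.normSq_conj, hn1, one_mul]
    have hnq : Complex.normSq (q * (starRingEnd ℂ) m) = Complex.normSq m := by
      rw [Complex.normSq_mul, Complex.normSq_conj, hn2, one_mul]
    rw [Complex.normSq_apply] at hnx hnq
    have him2 : (q * (starRingEnd ℂ) m).im = 0 := by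
      have : (q * (starRingEnd ℂ) m).im * (q * (starRingEnd ℂ) m).im = 0 := by
        rw [hre] at hnq; rw [him] at hnx; nlinarith
      exact mul_self_eq_zero.mp this
    have heq : q * (starRingEnd ℂ) m = x * (starRingEnd ℂ) m :=
      Complex.ext hre (by rw [him2, him])
    have hcm : (starRingEnd ℂ) m ≠ 0 := by simpa using hm
    exact mul_right_cancel₀ hcm heq
  have hle := Set.ncard_le_ncard hsub (Set.finite_singleton x)
  rw [Set.ncard_singleton] at hle
  omega

lemma signal_le_self (m : ℂ) (r : ℝ) (x : ℂ) (h : ‖x - m‖ = r) : signal m r x = 1 := by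
  rw [signal, if_pos h.le]

lemma signal_sides (m x : ℂ) (r : ℝ) (hr : 0 < r) (hx : ‖x‖ = 1)
    (hc : bTrace m r = ∅ ∨ (bTrace m r).ncard = 2) :
    ∃ a b : ℕ, rightVal (signal m r) x a ∧ leftVal (signal m r) x b ∧
      a + b + (if x ∈ bTrace m r then 1 else 0) = 2 * signal m r x := by
  by_cases hxb : ‖x - m‖ = r
  · have hxt : x ∈ bTrace m r := ⟨hx, hxb⟩
    have hc2 : (bTrace m r).ncard = 2 := by
      rcases hc with h | h
      · rw [h] at hxt; exact absurd hxt (Set.notMem_empty x)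
      · exact h
    have him := trace_im_ne hc2 hxt
    obtain ⟨δ, hδ, hcr⟩ := signal_cross m x r hr hx hxb him
    set B := (x * (starRingEnd ℂ) m).im with hB
    refine ⟨if 0 < B then 0 else 1, if 0 < B then 1 else 0, ?_, ?_, ?_⟩
    · refine ⟨δ, hδ, fun t ht0 htδ => ?_⟩
      rw [hcr t (ne_of_gt ht0) (by rw [abs_of_pos ht0]; exact htδ)]
      congr 1
      rw [eq_iff_iff]
      constructor
      · intro h; nlinarith
      · intro h; nlinarith
    · refine ⟨δ, hδ, fun t ht1 ht0 => ?_⟩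
      rw [hcr t (ne_of_lt ht0) (by rw [abs_of_neg ht0]; linarith)]
      rcases lt_or_gt_of_ne him with h | h
      · rw [if_pos (mul_pos_of_neg_of_neg ht0 h), if_neg (not_lt.mpr h.le)]
      · rw [if_neg (by nlinarith : ¬ (0 < t * B)), if_pos h]
    · rw [signal_le_self m r x hxb, if_pos hxt]
      rcases lt_or_gt_of_ne him with h | h
      · rw [if_neg (not_lt.mpr h.le), if_neg (not_lt.mpr h.le)]
      · rw [if_pos h, if_pos h]
  · obtain ⟨δ, hδ, hcr⟩ := signal_locally_const m x r hx hxb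
    refine ⟨signal m r x, signal m r x,
      ⟨δ, hδ, fun t ht0 htδ => hcr t (by rw [abs_of_pos ht0]; exact htδ)⟩,
      ⟨δ, hδ, fun t ht1 ht0 => hcr t (by rw [abs_of_neg ht0]; linarith)⟩, ?_⟩
    rw [if_neg (fun h => hxb h.2)]
    ring

lemma rightVal_sum {ι : Type*} [DecidableEq ι] (s : Finset ι) (f : ι → ℂ → ℕ) (a : ι → ℕ)
    (x : ℂ) (h : ∀ i ∈ s, rightVal (f i) x (a i)) :
    rightVal (fun y => ∑ i ∈ s, f i y) x (∑ i ∈ s, a i) := by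
  induction s using Finset.induction_on with
  | empty => exact ⟨1, one_pos, fun t _ _ => by simp⟩
  | insert j s' hni ih =>
    obtain ⟨δ, hδ, h1⟩ := h j (Finset.mem_insert_self j s')
    obtain ⟨δ', hδ', h2⟩ := ih (fun i hi => h i (Finset.mem_insert_of_mem hi))
    refine ⟨min δ δ', lt_min hδ hδ', fun t ht0 htδ => ?_⟩
    show (∑ i ∈ insert j s', f i (rot t x)) = ∑ i ∈ insert j s', a i
    rw [Finset.sum_insert hni, Finset.sum_insert hni,
      h1 t ht0 (lt_of_lt_of_le htδ (min_le_left _ _)),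
      show (∑ i ∈ s', f i (rot t x)) = ∑ i ∈ s', a i from
        h2 t ht0 (lt_of_lt_of_le htδ (min_le_right _ _))]

lemma leftVal_sum {ι : Type*} [DecidableEq ι] (s : Finset ι) (f : ι → ℂ → ℕ) (a : ι → ℕ)
    (x : ℂ) (h : ∀ i ∈ s, leftVal (f i) x (a i)) :
    leftVal (fun y => ∑ i ∈ s, f i y) x (∑ i ∈ s, a i) := by
  induction s using Finset.induction_on with
  | empty => exact ⟨1, one_pos, fun t _ _ => by simp⟩
  | insert j s' hni ih =>
    obtain ⟨δ, hδ, h1⟩ := h j (Finset.mem_insert_self j s')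
    obtain ⟨δ', hδ', h2⟩ := ih (fun i hi => h i (Finset.mem_insert_of_mem hi))
    refine ⟨min δ δ', lt_min hδ hδ', fun t htδ ht0 => ?_⟩
    show (∑ i ∈ insert j s', f i (rot t x)) = ∑ i ∈ insert j s', a i
    rw [Finset.sum_insert hni, Finset.sum_insert hni,
      h1 t (lt_of_le_of_lt (neg_le_neg (min_le_left _ _)) htδ) ht0,
      show (∑ i ∈ s', f i (rot t x)) = ∑ i ∈ s', a i from
        h2 t (lt_of_le_of_lt (neg_le_neg (min_le_right _ _)) htδ) ht0]

/-- multiplicity of `x` among the boundary traces of `v` -/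
def mult {n : ℕ} (v : Fin n → ℂ × ℝ) (x : ℂ) : ℕ :=
  (Finset.univ.filter (fun i => x ∈ bTrace (v i).1 (v i).2)).card

lemma Hsum_sides {n : ℕ} (v : Fin n → ℂ × ℝ) (hr : ∀ i, 0 < (v i).2)
    (hc : ∀ i, bTrace (v i).1 (v i).2 = ∅ ∨ (bTrace (v i).1 (v i).2).ncard = 2)
    (x : ℂ) (hx : ‖x‖ = 1) :
    ∃ a b : ℕ, rightVal (Hsum v) x a ∧ leftVal (Hsum v) x b ∧
      a + b + mult v x = 2 * Hsum v x := by
  choose a b ha hb hab using fun i => signal_sides (v i).1 x (v i).2 (hr i) hx (hc i)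
  refine ⟨∑ i, a i, ∑ i, b i, ?_, ?_, ?_⟩
  · exact rightVal_sum Finset.univ _ _ x (fun i _ => ha i)
  · exact leftVal_sum Finset.univ _ _ x (fun i _ => hb i)
  · have h1 : mult v x = ∑ i, (if x ∈ bTrace (v i).1 (v i).2 then 1 else 0) :=
      Finset.card_filter _ _
    have h2 : Hsum v x = ∑ i, signal (v i).1 (v i).2 x := rfl
    rw [h1, h2, Finset.mul_sum, ← Finset.sum_add_distrib, ← Finset.sum_add_distrib]
    exact Finset.sum_congr rfl (fun i _ => hab i)

/-- two properly u.s.c. decompositions of the same function (modulo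
finite sets), each using only signals whose boundary trace has exactly 0 or 2
elements, have the same `N`-degrees of freedom. -/
theorem stmt14 {n₁ n₂ : ℕ} (v₁ : Fin n₁ → ℂ × ℝ) (v₂ : Fin n₂ → ℂ × ℝ)
    (hr₁ : ∀ i, 0 < (v₁ i).2) (hr₂ : ∀ i, 0 < (v₂ i).2)
    (h₁ : ProperlyUSC (Hsum v₁)) (h₂ : ProperlyUSC (Hsum v₂))
    (hc₁ : ∀ i : Fin n₁,
      bTrace (v₁ i).1 (v₁ i).2 = ∅ ∨ (bTrace (v₁ i).1 (v₁ i).2).ncard = 2)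
    (hc₂ : ∀ i : Fin n₂,
      bTrace (v₂ i).1 (v₂ i).2 = ∅ ∨ (bTrace (v₂ i).1 (v₂ i).2).ncard = 2)
    (hfin : {x ∈ S1 | Hsum v₁ x ≠ Hsum v₂ x}.Finite)
    (N : ℕ) (hN₁ : n₁ ≤ N) (hN₂ : n₂ ≤ N) :
    DoF N v₁ = DoF N v₂ := by
  classical
  have hagree : ∀ y : ℂ, ‖y‖ = 1 → y ∉ {x ∈ S1 | Hsum v₁ x ≠ Hsum v₂ x} →
      Hsum v₁ y = Hsum v₂ y := by
    intro y hy hyn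
    by_contra hne
    exact hyn ⟨hy, hne⟩
  have hmult : ∀ x : ℂ, ‖x‖ = 1 → mult v₁ x = mult v₂ x := by
    intro x hx
    have hxS : x ∈ S1 := hx
    have hx0 : x ≠ 0 := by intro h; rw [h, norm_zero] at hx; norm_num at hx
    obtain ⟨a₁, b₁, ha₁, hb₁, hab₁⟩ := Hsum_sides v₁ hr₁ hc₁ x hx
    obtain ⟨a₂, b₂, ha₂, hb₂, hab₂⟩ := Hsum_sides v₂ hr₂ hc₂ x hx
    have haa : a₁ = a₂ := by
      obtain ⟨δ, hδ, hv1⟩ := ha₁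
      obtain ⟨δ', hδ', hv2⟩ := ha₂
      obtain ⟨t, ht0, htδ, htF⟩ := exists_rot_avoid hfin x hx0 (min δ δ') (lt_min hδ hδ')
      rw [← hv1 t ht0 (lt_of_lt_of_le htδ (min_le_left _ _)),
          ← hv2 t ht0 (lt_of_lt_of_le htδ (min_le_right _ _))]
      exact hagree _ (by rw [norm_rot, hx]) htF
    have hbb : b₁ = b₂ := by
      obtain ⟨δ, hδ, hv1⟩ := hb₁
      obtain ⟨δ', hδ', hv2⟩ := hb₂
      obtain ⟨t, htδ, ht0, htF⟩ := exists_rot_avoid_neg hfin x hx0 (min δ δ') (lt_min hδ hδ')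
      have l1 : -δ < t := lt_of_le_of_lt (neg_le_neg (min_le_left _ _)) htδ
      have l2 : -δ' < t := lt_of_le_of_lt (neg_le_neg (min_le_right _ _)) htδ
      rw [← hv1 t l1 ht0, ← hv2 t l2 ht0]
      exact hagree _ (by rw [norm_rot, hx]) htF
    have hHH : Hsum v₁ x = Hsum v₂ x := by
      obtain ⟨a, b, ha, hb, hmax⟩ := h₁ x hxS
      obtain ⟨a', b', ha', hb', hmax'⟩ := h₂ x hxS
      rw [rightVal_unique ha ha₁, leftVal_unique hb hb₁] at hmax
      rw [rightVal_unique ha' ha₂, leftVal_unique hb' hb₂] at hmax'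
      rw [hmax, hmax', haa, hbb]
    omega
  -- finiteness of traces
  have hfin₁ : ∀ i, (bTrace (v₁ i).1 (v₁ i).2).Finite := by
    intro i
    rcases hc₁ i with h | h
    · rw [h]; exact Set.finite_empty
    · exact Set.finite_of_ncard_ne_zero (by rw [h]; omega)
  have hfin₂ : ∀ i, (bTrace (v₂ i).1 (v₂ i).2).Finite := by
    intro i
    rcases hc₂ i with h | h
    · rw [h]; exact Set.finite_empty
    · exact Set.finite_of_ncard_ne_zero (by rw [h]; omega)
  have hT : ((⋃ i, bTrace (v₁ i).1 (v₁ i).2) ∪ (⋃ i, bTrace (v₂ i).1 (v₂ i).2)).Finite :=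
    (Set.finite_iUnion hfin₁).union (Set.finite_iUnion hfin₂)
  set Tf := hT.toFinset with hTfdef
  have hTf_norm : ∀ x ∈ Tf, ‖x‖ = 1 := by
    intro x hxT
    rw [hTfdef, Set.Finite.mem_toFinset] at hxT
    rcases hxT with hxT | hxT <;>
    · obtain ⟨s, ⟨i, rfl⟩, hxs⟩ := hxT
      exact hxs.1
  have key : ∀ (n : ℕ) (v : Fin n → ℂ × ℝ)
      (hsub : ∀ i, bTrace (v i).1 (v i).2 ⊆ ↑Tf)
      (hf : ∀ i, (bTrace (v i).1 (v i).2).Finite),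
      ∑ i, (bTrace (v i).1 (v i).2).ncard = ∑ x ∈ Tf, mult v x := by
    intro n v hsub hf
    have h1 : ∀ i : Fin n, (bTrace (v i).1 (v i).2).ncard
        = (Tf.filter (fun x => x ∈ bTrace (v i).1 (v i).2)).card := by
      intro i
      rw [Set.ncard_eq_toFinset_card _ (hf i)]
      congr 1
      apply Finset.ext
      intro y
      rw [Finset.mem_filter, Set.Finite.mem_toFinset]
      constructor
      · intro hy
        have hyT : y ∈ Tf := Finset.mem_coe.mp (hsub i hy)
        exact ⟨hyT, hy⟩
      · intro hy
        exact hy.2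
    calc ∑ i, (bTrace (v i).1 (v i).2).ncard
        = ∑ i, ∑ x ∈ Tf, (if x ∈ bTrace (v i).1 (v i).2 then 1 else 0) := by
          refine Finset.sum_congr rfl fun i _ => ?_
          rw [h1 i, Finset.card_filter]
      _ = ∑ x ∈ Tf, ∑ i, (if x ∈ bTrace (v i).1 (v i).2 then 1 else 0) := Finset.sum_comm
      _ = ∑ x ∈ Tf, mult v x := by
          refine Finset.sum_congr rfl fun x _ => ?_
          rw [mult, Finset.card_filter]
  have hsub₁ : ∀ i, bTrace (v₁ i).1 (v₁ i).2 ⊆ ↑Tf := by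
    intro i y hy
    rw [hTfdef]
    simp only [Set.Finite.coe_toFinset]
    exact Or.inl (Set.mem_iUnion.mpr ⟨i, hy⟩)
  have hsub₂ : ∀ i, bTrace (v₂ i).1 (v₂ i).2 ⊆ ↑Tf := by
    intro i y hy
    rw [hTfdef]
    simp only [Set.Finite.coe_toFinset]
    exact Or.inr (Set.mem_iUnion.mpr ⟨i, hy⟩)
  have hS : ∑ i, (bTrace (v₁ i).1 (v₁ i).2).ncard
      = ∑ i, (bTrace (v₂ i).1 (v₂ i).2).ncard := by
    rw [key n₁ v₁ hsub₁ hfin₁, key n₂ v₂ hsub₂ hfin₂]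
    exact Finset.sum_congr rfl fun x hxT => hmult x (hTf_norm x hxT)
  have hrho₁ : ∀ i, rho (v₁ i).1 (v₁ i).2 + (bTrace (v₁ i).1 (v₁ i).2).ncard = 3 := by
    intro i
    rcases hc₁ i with h | h
    · rw [rho, if_pos h, h, Set.ncard_empty]
    · have hne : bTrace (v₁ i).1 (v₁ i).2 ≠ ∅ := by
        intro he; rw [he, Set.ncard_empty] at h; omega
      rw [rho, if_neg hne, if_pos (Or.inr h), h]
  have hrho₂ : ∀ i, rho (v₂ i).1 (v₂ i).2 + (bTrace (v₂ i).1 (v₂ i).2).ncard = 3 := by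
    intro i
    rcases hc₂ i with h | h
    · rw [rho, if_pos h, h, Set.ncard_empty]
    · have hne : bTrace (v₂ i).1 (v₂ i).2 ≠ ∅ := by
        intro he; rw [he, Set.ncard_empty] at h; omega
      rw [rho, if_neg hne, if_pos (Or.inr h), h]
  have hsum₁ : ∑ i, rho (v₁ i).1 (v₁ i).2 + ∑ i, (bTrace (v₁ i).1 (v₁ i).2).ncard
      = 3 * n₁ := by
    rw [← Finset.sum_add_distrib]
    rw [Finset.sum_congr rfl fun i _ => hrho₁ i]
    simp [Finset.sum_const, mul_comm]
  have hsum₂ : ∑ i, rho (v₂ i).1 (v₂ i).2 + ∑ i, (bTrace (v₂ i).1 (v₂ i).2).ncard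
      = 3 * n₂ := by
    rw [← Finset.sum_add_distrib]
    rw [Finset.sum_congr rfl fun i _ => hrho₂ i]
    simp [Finset.sum_const, mul_comm]
  rw [DoF, DoF]
  omega
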